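/- arXiv:math/0204111 — 3 statements merged into one kernel-verified Lean document; each statement's English description precedes it below -/
import Mathlib

section
/- Let E be a Fréchet space (or complete normed space) and (C^•, d) a cochain complex of such spaces with continuous differentials. Suppose C^•_i (i ≥ 1) are closed subcomplexes such that for each p the family (C^p_i) is an unconditional Schauder basis of subspaces of C^p (every element is a unique unconditionally convergent sum of elements of the C^p_i with continuous projections). Then the reduced cohomology satisfies: ⊕_i H̄^p(C^•_i) is dense in H̄^p(C^•) and every element of H̄^p(C^•) is an unconditionally convergent sum of elements of the images of H̄^p(C^•_i). -/
/-- Given a cochain complex (displayed around degree `p` as `A → B → C`) of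
topological vector spaces with continuous differentials and closed subcomplexes
`(SA i, SB i, SC i)` forming in each degree an unconditional Schauder basis of
subspaces (with continuous projections `π`), the reduced cohomology at the middle
degree is the "closed unconditional direct sum" of the reduced cohomologies of the
subcomplexes: the algebraic sum of the images is dense, and every class is an
unconditionally convergent sum of classes coming from the subcomplexes. -/
theorem stmt2 {A B C : Type*}
    [AddCommGroup A] [Module ℂ A] [TopologicalSpace A] [IsTopologicalAddGroup A]
    [ContinuousSMul ℂ A]
    [AddCommGroup B] [Module ℂ B] [TopologicalSpace B] [IsTopologicalAddGroup B]
    [ContinuousSMul ℂ B]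
    [AddCommGroup C] [Module ℂ C] [TopologicalSpace C] [IsTopologicalAddGroup C]
    [ContinuousSMul ℂ C]
    (d₁ : A →L[ℂ] B) (d₂ : B →L[ℂ] C) (hd : ∀ a, d₂ (d₁ a) = 0)
    (SA : ℕ → Submodule ℂ A) (SB : ℕ → Submodule ℂ B) (SC : ℕ → Submodule ℂ C)
    (hSA : ∀ i, IsClosed (SA i : Set A)) (hSB : ∀ i, IsClosed (SB i : Set B))
    (hSC : ∀ i, IsClosed (SC i : Set C))
    (hd₁S : ∀ i, ∀ a ∈ SA i, d₁ a ∈ SB i)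
    (hd₂S : ∀ i, ∀ b ∈ SB i, d₂ b ∈ SC i)
    (πA : ℕ → (A →L[ℂ] A)) (hπA₁ : ∀ i a, πA i a ∈ SA i)
    (hπA₂ : ∀ a : A, HasSum (fun i => πA i a) a)
    (hAuniq : ∀ (a : A) (f : ℕ → A), (∀ i, f i ∈ SA i) → HasSum f a →
      ∀ i, f i = πA i a)
    (πB : ℕ → (B →L[ℂ] B)) (hπB₁ : ∀ i b, πB i b ∈ SB i)
    (hπB₂ : ∀ b : B, HasSum (fun i => πB i b) b)
    (hBuniq : ∀ (b : B) (f : ℕ → B), (∀ i, f i ∈ SB i) → HasSum f b →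
      ∀ i, f i = πB i b)
    (πC : ℕ → (C →L[ℂ] C)) (hπC₁ : ∀ i c, πC i c ∈ SC i)
    (hπC₂ : ∀ c : C, HasSum (fun i => πC i c) c)
    (hCuniq : ∀ (c : C) (f : ℕ → C), (∀ i, f i ∈ SC i) → HasSum f c →
      ∀ i, f i = πC i c) :
    (LinearMap.ker d₂.toLinearMap ≤
      ((⨆ i, (SB i ⊓ LinearMap.ker d₂.toLinearMap)) ⊔
        (LinearMap.range d₁.toLinearMap).topologicalClosure).topologicalClosure) ∧
    (∀ b ∈ LinearMap.ker d₂.toLinearMap, ∃ f : ℕ → B,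
      (∀ i, f i ∈ SB i ⊓ LinearMap.ker d₂.toLinearMap) ∧
      ∃ b' : B, HasSum f b' ∧
        b - b' ∈ (LinearMap.range d₁.toLinearMap).topologicalClosure) := by
  have key : ∀ b : B, d₂ b = 0 → ∀ i, d₂ (πB i b) = 0 := by
    intro b hb i
    have h1 : HasSum (fun i => d₂ (πB i b)) (d₂ b) := (hπB₂ b).mapL d₂
    have h2 := hCuniq (d₂ b) _ (fun i => hd₂S i _ (hπB₁ i b)) h1 i
    rw [hb, map_zero] at h2
    exact h2
  have hmem : ∀ b : B, d₂ b = 0 → ∀ i, πB i b ∈ SB i ⊓ LinearMap.ker d₂.toLinearMap := by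
    intro b hb i
    exact ⟨hπB₁ i b, key b hb i⟩
  constructor
  · intro b hb
    have hb' : d₂ b = 0 := hb
    have hsum := hπB₂ b
    have hsub : ∀ s : Finset ℕ, (∑ i ∈ s, πB i b) ∈
        ((⨆ i, (SB i ⊓ LinearMap.ker d₂.toLinearMap)) ⊔
          (LinearMap.range d₁.toLinearMap).topologicalClosure) := by
      intro s
      refine Submodule.sum_mem _ (fun i _ => ?_)
      exact Submodule.mem_sup_left (Submodule.mem_iSup_of_mem i (hmem b hb' i))
    show b ∈ closure (_ : Set B)
    exact mem_closure_of_tendsto hsum (Filter.Eventually.of_forall (fun s => hsub s))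
  · intro b hb
    have hb' : d₂ b = 0 := hb
    exact ⟨fun i => πB i b, hmem b hb', b, hπB₂ b, by
      simp only [sub_self]; exact Submodule.zero_mem _⟩
end

section
/- Let V be a complex vector space with a symmetric bilinear form φ, and let so_fin(V, φ) denote the Lie algebra of finite-rank endomorphisms A of V satisfying φ(Au, v) + φ(u, Av) = 0 for all u, v. If φ is nondegenerate (in the sense that for every nonzero u there is v with φ(u,v) ≠ 0) and V is infinite-dimensional, then so_fin(V, φ) is a simple Lie algebra. -/
open Submodule LinearMap

section helpers
variable {V : Type*} [AddCommGroup V] [Module ℂ V] (φ : V →ₗ[ℂ] V →ₗ[ℂ] ℂ)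

/-- elementary skew map -/
def Tm (u w : V) : Module.End ℂ V := ((φ u).smulRight w) - ((φ w).smulRight u)

lemma Tm_apply (u w v : V) : Tm φ u w v = φ u v • w - φ w v • u := rfl

lemma Tm_skew (hsymm : ∀ u v, φ u v = φ v u) (u w v₁ v₂ : V) :
    φ (Tm φ u w v₁) v₂ + φ v₁ (Tm φ u w v₂) = 0 := by
  simp only [Tm_apply, map_sub, map_smul, smul_eq_mul, LinearMap.sub_apply, LinearMap.smul_apply]
  rw [hsymm v₁ u, hsymm v₁ w]
  ring

lemma Tm_bracket (A : Module.End ℂ V) (hA : ∀ u v, φ (A u) v + φ u (A v) = 0)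
    (u w : V) : ⁅A, Tm φ u w⁆ = Tm φ (A u) w + Tm φ u (A w) := by
  ext v
  have h1 : φ u (A v) = -φ (A u) v := by linear_combination hA u v
  have h2 : φ w (A v) = -φ (A w) v := by linear_combination hA w v
  simp only [Ring.lie_def, Module.End.mul_apply, LinearMap.sub_apply, LinearMap.add_apply, Tm_apply,
    map_sub, map_smul, h1, h2]
  module

lemma Tm_add_left (a b w : V) : Tm φ (a + b) w = Tm φ a w + Tm φ b w := by
  ext v; simp [Tm_apply]; module

lemma Tm_smul_left (c : ℂ) (a w : V) : Tm φ (c • a) w = c • Tm φ a w := by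
  ext v; simp [Tm_apply, smul_smul, mul_comm]; module

lemma Tm_add_right (a w₁ w₂ : V) : Tm φ a (w₁ + w₂) = Tm φ a w₁ + Tm φ a w₂ := by
  ext v; simp [Tm_apply]; module

lemma Tm_smul_right (c : ℂ) (a w : V) : Tm φ a (c • w) = c • Tm φ a w := by
  ext v; simp [Tm_apply, smul_smul, mul_comm]; module

lemma Tm_neg_swap (u w : V) : Tm φ u w = - Tm φ w u := by
  ext v; simp [Tm_apply]

lemma Tm_self (u : V) : Tm φ u u = 0 := by
  ext v; simp [Tm_apply]

end helpers
section helpers2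
open scoped Classical
variable {V : Type*} [AddCommGroup V] [Module ℂ V] (φ : V →ₗ[ℂ] V →ₗ[ℂ] ℂ)

/-- orthonormal finite set -/
def ONS (s : Finset V) : Prop := ∀ u ∈ s, ∀ v ∈ s, φ u v = if u = v then 1 else 0

lemma orth_span {s : Finset V} {c : V} (h : ∀ u ∈ s, φ c u = 0) :
    ∀ z ∈ Submodule.span ℂ (s : Set V), φ c z = 0 := by
  intro z hz
  have hle : Submodule.span ℂ (s : Set V) ≤ LinearMap.ker (φ c) :=
    Submodule.span_le.mpr (fun u hu => h u hu)
  exact hle hz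

lemma ONS_insert (hsymm : ∀ u v, φ u v = φ v u) {s : Finset V} (hs : ONS φ s) {c : V}
    (hc : φ c c = 1) (horth : ∀ u ∈ s, φ c u = 0) : ONS φ (insert c s) := by
  intro u hu v hv
  rcases Finset.mem_insert.mp hu with hu1 | hu'
  · rcases Finset.mem_insert.mp hv with hv1 | hv'
    · rw [hu1, hv1]; simp [hc]
    · rw [hu1]
      by_cases h : v = c
      · rw [h]; simp [hc]
      · rw [if_neg (fun hh => h hh.symm)]; exact horth v hv'
  · rcases Finset.mem_insert.mp hv with hv1 | hv'
    · rw [hv1]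
      by_cases h : u = c
      · rw [h]; simp [hc]
      · rw [if_neg h, hsymm]; exact horth u hu'
    · exact hs u hu' v hv'

lemma ONS_expand {s : Finset V} (hs : ONS φ s) {z : V}
    (hz : z ∈ Submodule.span ℂ (s : Set V)) : z = ∑ u ∈ s, φ u z • u := by
  have hle : Submodule.span ℂ (s : Set V) ≤
      LinearMap.ker (LinearMap.id - ∑ u ∈ s, (φ u).smulRight u) := by
    rw [Submodule.span_le]
    intro w hw
    simp only [SetLike.mem_coe, LinearMap.mem_ker, LinearMap.sub_apply, LinearMap.id_apply,
      LinearMap.sum_apply, LinearMap.smulRight_apply, sub_eq_zero]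
    rw [Finset.sum_congr rfl (fun u hu => by rw [hs u hu w hw])]
    simp only [ite_smul, one_smul, zero_smul]
    rw [Finset.sum_ite_eq' s w (fun u => u), if_pos (Finset.mem_coe.mp hw)]
  have h := hle hz
  simp only [LinearMap.mem_ker, LinearMap.sub_apply, LinearMap.id_apply,
    LinearMap.sum_apply, LinearMap.smulRight_apply, sub_eq_zero] at h
  exact h

end helpers2
section helpers3
open scoped Classical
open Submodule
variable {V : Type*} [AddCommGroup V] [Module ℂ V] (φ : V →ₗ[ℂ] V →ₗ[ℂ] ℂ)

lemma proj_orth {s : Finset V} (hs : ONS φ s) (z : V) :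
    ∀ u ∈ s, φ u (z - ∑ w ∈ s, φ w z • w) = 0 := by
  intro u hu
  simp only [map_sub, map_sum, map_smul, smul_eq_mul]
  rw [sub_eq_zero]
  have h : ∀ w ∈ s, φ w z * φ u w = if w = u then φ w z else 0 := by
    intro w hw
    rw [hs u hu w hw]
    by_cases h : w = u
    · subst h; simp
    · rw [if_neg (fun hh : u = w => h hh.symm), if_neg h, mul_zero]
  rw [Finset.sum_congr rfl h, Finset.sum_ite_eq' s u (fun w => φ w z), if_pos hu]

lemma exists_extend (hsymm : ∀ u v, φ u v = φ v u) (hnd : ∀ u : V, u ≠ 0 → ∃ v, φ u v ≠ 0)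
    {s : Finset V} (hs : ONS φ s) (v : V) :
    ∃ t : Finset V, ONS φ t ∧ s ⊆ t ∧ v ∈ Submodule.span ℂ (t : Set V) := by
  set v' := v - ∑ u ∈ s, φ u v • u with hv'def
  have hv'orth : ∀ u ∈ s, φ u v' = 0 := proj_orth φ hs v
  have hvsum : v = v' + ∑ u ∈ s, φ u v • u := by rw [hv'def]; abel
  have hsummem : ∀ t : Finset V, s ⊆ t → (∑ u ∈ s, φ u v • u) ∈ span ℂ (t : Set V) := by
    intro t hst
    exact sum_mem fun u hu => smul_mem _ _ (subset_span (hst hu))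
  by_cases hv0 : v' = 0
  · refine ⟨s, hs, Finset.Subset.refl s, ?_⟩
    rw [hvsum, hv0, zero_add]
    exact hsummem s (Finset.Subset.refl s)
  by_cases hq0 : φ v' v' = 0
  · -- isotropic case: hyperbolic pair
    obtain ⟨w, hw⟩ := hnd v' hv0
    set w' := w - ∑ u ∈ s, φ u w • u with hw'def
    have hw'orth : ∀ u ∈ s, φ u w' = 0 := proj_orth φ hs w
    have hsw : φ v' w' ≠ 0 := by
      have : φ v' w' = φ v' w := by
        rw [hw'def, map_sub, map_sum]
        have : ∀ u ∈ s, φ v' (φ u w • u) = 0 := by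
          intro u hu
          rw [map_smul, smul_eq_mul, hsymm v' u, hv'orth u hu, mul_zero]
        rw [Finset.sum_congr rfl this, Finset.sum_const_zero, sub_zero]
      rw [this]; exact hw
    set σ := φ v' w' with hσdef
    set p := σ⁻¹ • v' with hpdef
    have hpp : φ p p = 0 := by
      simp only [hpdef, map_smul, LinearMap.smul_apply, smul_eq_mul, hq0, mul_zero]
    have hpw' : φ p w' = 1 := by
      simp only [hpdef, map_smul, LinearMap.smul_apply, smul_eq_mul, ← hσdef]
      exact inv_mul_cancel₀ hsw
    have hup : ∀ u ∈ s, φ u p = 0 := by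
      intro u hu; simp only [hpdef, map_smul, smul_eq_mul, hv'orth u hu, mul_zero]
    set q := w' - (φ w' w' / 2) • p with hqdef
    have hpq : φ p q = 1 := by
      simp only [hqdef, map_sub, map_smul, smul_eq_mul, hpw', hpp]; ring
    have hqp : φ q p = 1 := by rw [hsymm]; exact hpq
    have hqq : φ q q = 0 := by
      simp only [hqdef, map_sub, map_smul, LinearMap.sub_apply, LinearMap.smul_apply,
        smul_eq_mul, hpw', hpp, hsymm w' p, hsymm v' p]
      ring
    have huq : ∀ u ∈ s, φ u q = 0 := by
      intro u hu
      simp only [hqdef, map_sub, map_smul, smul_eq_mul, hw'orth u hu, hup u hu,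
        mul_zero, sub_zero]
    set c₁ := p + (2:ℂ)⁻¹ • q with hc1def
    set c₂ := Complex.I • ((2:ℂ)⁻¹ • q - p) with hc2def
    have hc1c1 : φ c₁ c₁ = 1 := by
      simp only [hc1def, map_add, map_smul, LinearMap.add_apply, LinearMap.smul_apply,
        smul_eq_mul, hpp, hpq, hqp, hqq]
      norm_num
    have hinner : φ ((2:ℂ)⁻¹ • q - p) ((2:ℂ)⁻¹ • q - p) = -1 := by
      simp only [map_sub, map_smul, LinearMap.sub_apply, LinearMap.smul_apply,
        smul_eq_mul, hpp, hpq, hqp, hqq]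
      norm_num
    have hc2c2 : φ c₂ c₂ = 1 := by
      simp only [hc2def, map_smul, LinearMap.smul_apply, smul_eq_mul, hinner]
      simp [← mul_assoc, Complex.I_mul_I]
    have hinner2 : φ c₁ ((2:ℂ)⁻¹ • q - p) = 0 := by
      simp only [hc1def, map_add, map_sub, map_smul, LinearMap.add_apply,
        LinearMap.sub_apply, LinearMap.smul_apply, smul_eq_mul, hpp, hpq, hqp, hqq]
      ring
    have hc1c2 : φ c₁ c₂ = 0 := by
      simp only [hc2def, map_smul, smul_eq_mul, hinner2, mul_zero]
    have hc1u : ∀ u ∈ s, φ c₁ u = 0 := by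
      intro u hu
      simp only [hc1def, map_add, map_smul, LinearMap.add_apply, LinearMap.smul_apply,
        smul_eq_mul, hsymm p u, hsymm q u, hup u hu, huq u hu, mul_zero, add_zero]
    have hc2u : ∀ u ∈ s, φ c₂ u = 0 := by
      intro u hu
      simp only [hc2def, map_smul, map_sub, LinearMap.smul_apply, LinearMap.sub_apply,
        smul_eq_mul, hsymm p u, hsymm q u, hup u hu, huq u hu]
      ring
    have hons1 : ONS φ (insert c₁ s) := ONS_insert φ hsymm hs hc1c1 hc1u
    have hons2 : ONS φ (insert c₂ (insert c₁ s)) := by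
      refine ONS_insert φ hsymm hons1 hc2c2 ?_
      intro u hu
      rcases Finset.mem_insert.mp hu with h | h
      · rw [h, hsymm]; exact hc1c2
      · exact hc2u u h
    refine ⟨insert c₂ (insert c₁ s), hons2,
      (Finset.subset_insert c₁ s).trans (Finset.subset_insert c₂ _), ?_⟩
    have hIc2 : Complex.I • c₂ = p - (2:ℂ)⁻¹ • q := by
      rw [hc2def, smul_smul, Complex.I_mul_I]; module
    have hpmem : p ∈ span ℂ ((insert c₂ (insert c₁ s) : Finset V) : Set V) := by
      have hp2 : p = (2:ℂ)⁻¹ • (c₁ + Complex.I • c₂) := by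
        rw [hc1def, hIc2]; module
      rw [hp2]
      refine smul_mem _ _ (add_mem (subset_span ?_) (smul_mem _ _ (subset_span ?_)))
      · simp
      · simp
    have hv'p : v' = σ • p := by
      rw [hpdef, smul_smul, mul_inv_cancel₀ hsw, one_smul]
    rw [hvsum, hv'p]
    exact add_mem (smul_mem _ _ hpmem)
      (hsummem _ ((Finset.subset_insert c₁ s).trans (Finset.subset_insert c₂ _)))
  · -- non-isotropic: normalize
    obtain ⟨r, hr⟩ := IsAlgClosed.exists_pow_nat_eq (φ v' v') two_pos
    have hrne : r ≠ 0 := by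
      intro h; rw [h] at hr; simp at hr; exact hq0 hr.symm
    set c := r⁻¹ • v' with hcdef
    have hcc : φ c c = 1 := by
      simp only [hcdef, map_smul, LinearMap.smul_apply, smul_eq_mul, ← hr]
      field_simp
    have hcu : ∀ u ∈ s, φ c u = 0 := by
      intro u hu
      simp only [hcdef, map_smul, LinearMap.smul_apply, smul_eq_mul, hsymm v' u,
        hv'orth u hu, mul_zero]
    refine ⟨insert c s, ONS_insert φ hsymm hs hcc hcu, Finset.subset_insert c s, ?_⟩
    have hv'c : v' = r • c := by
      rw [hcdef, smul_smul, mul_inv_cancel₀ hrne, one_smul]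
    rw [hvsum, hv'c]
    exact add_mem (smul_mem _ _ (subset_span (by simp)))
      (hsummem _ (Finset.subset_insert c s))
end helpers3
section helpers4
open scoped Classical
open Submodule
variable {V : Type*} [AddCommGroup V] [Module ℂ V] (φ : V →ₗ[ℂ] V →ₗ[ℂ] ℂ)

lemma exists_ons_span (hsymm : ∀ u v, φ u v = φ v u)
    (hnd : ∀ u : V, u ≠ 0 → ∃ v, φ u v ≠ 0) (b : Finset V) :
    ∃ t : Finset V, ONS φ t ∧ (b : Set V) ⊆ (span ℂ (t : Set V) : Set V) := by
  induction b using Finset.induction_on with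
  | empty => exact ⟨∅, fun u hu _ hv => absurd hu (Finset.notMem_empty u), by simp⟩
  | @insert a b ha ih =>
    obtain ⟨t, ht, hb⟩ := ih
    obtain ⟨t', ht', htt', hat'⟩ := exists_extend φ hsymm hnd ht a
    refine ⟨t', ht', ?_⟩
    rw [Finset.coe_insert]
    intro x hx
    rcases hx with rfl | hx
    · exact hat'
    · exact span_mono (Finset.coe_subset.mpr htt') (hb hx)

lemma exists_unit_orth (hsymm : ∀ u v, φ u v = φ v u)
    (hnd : ∀ u : V, u ≠ 0 → ∃ v, φ u v ≠ 0) (hinf : ¬ FiniteDimensional ℂ V)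
    {t : Finset V} (ht : ONS φ t) :
    ∃ c, φ c c = 1 ∧ ∀ u ∈ span ℂ (t : Set V), φ c u = 0 := by
  have hvex : ∃ v, v ∉ span ℂ (t : Set V) := by
    by_contra h
    push_neg at h
    have htop : span ℂ (t : Set V) = ⊤ := eq_top_iff.mpr fun v _ => h v
    have hfd : FiniteDimensional ℂ (span ℂ (t : Set V)) :=
      FiniteDimensional.span_of_finite ℂ t.finite_toSet
    rw [htop] at hfd
    exact hinf (Submodule.topEquiv.finiteDimensional)
  obtain ⟨v, hv⟩ := hvex
  obtain ⟨t', ht', htt', hvt'⟩ := exists_extend φ hsymm hnd ht v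
  have hns : ¬ (t' ⊆ t) := fun hsub => hv (span_mono (Finset.coe_subset.mpr hsub) hvt')
  obtain ⟨c, hct', hct⟩ := Finset.not_subset.mp hns
  have hcc : φ c c = 1 := by simpa using ht' c hct' c hct'
  have horth : ∀ u ∈ t, φ c u = 0 := by
    intro u hu
    have h := ht' c hct' u (htt' hu)
    rwa [if_neg (fun hh : c = u => hct (by rw [hh]; exact hu))] at h
  exact ⟨c, hcc, orth_span φ horth⟩

lemma skew_vanish (hnd : ∀ u : V, u ≠ 0 → ∃ v, φ u v ≠ 0)
    {A : Module.End ℂ V} (hA : ∀ u v, φ (A u) v + φ u (A v) = 0)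
    {t : Finset V} (hrange : ∀ v, A v ∈ span ℂ (t : Set V)) {c : V}
    (hc : ∀ u ∈ t, φ c u = 0) : A c = 0 := by
  by_contra h
  obtain ⟨v, hv⟩ := hnd (A c) h
  apply hv
  have h1 : φ (A c) v = - φ c (A v) := by linear_combination hA c v
  rw [h1, orth_span φ hc (A v) (hrange v), neg_zero]

/-- the set of elementary skew maps -/
def TmSet : Set (Module.End ℂ V) := {B | ∃ u w, B = Tm φ u w}

lemma mem_span_Tm (hsymm : ∀ u v, φ u v = φ v u)
    {A : Module.End ℂ V} (hA : ∀ u v, φ (A u) v + φ u (A v) = 0)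
    {t : Finset V} (ht : ONS φ t) (hrange : ∀ v, A v ∈ span ℂ (t : Set V)) :
    A ∈ span ℂ (TmSet φ) := by
  have hM : ∀ u w, φ w (A u) = -(φ u (A w)) := by
    intro u w
    rw [hsymm w (A u)]
    linear_combination hA u w
  have hAeq : A = ∑ u ∈ t, ∑ w ∈ t, (-(φ u (A w))/2) • Tm φ u w := by
    ext v
    have hAv : A v = ∑ w ∈ t, ∑ u ∈ t, (-(φ u (A w)) * φ u v) • w := by
      rw [ONS_expand φ ht (hrange v)]
      refine Finset.sum_congr rfl fun w hw => ?_
      have h1 : φ w (A v) = - φ (A w) v := by linear_combination hA w v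
      have h2 : φ (A w) v = ∑ u ∈ t, φ u (A w) * φ u v := by
        conv_lhs => rw [ONS_expand φ ht (hrange w)]
        rw [map_sum, LinearMap.sum_apply]
        refine Finset.sum_congr rfl fun u hu => ?_
        rw [map_smul, LinearMap.smul_apply, smul_eq_mul]
      rw [h1, h2, ← Finset.sum_smul, neg_eq_neg_one_mul, Finset.mul_sum]
      refine congrArg (· • w) ?_
      exact Finset.sum_congr rfl fun u hu => by ring
    have hBv : (∑ u ∈ t, ∑ w ∈ t, (-(φ u (A w))/2) • Tm φ u w) v
        = ∑ w ∈ t, ∑ u ∈ t, (-(φ u (A w)) * φ u v) • w := by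
      rw [LinearMap.sum_apply]
      have step1 : ∀ u ∈ t, (∑ w ∈ t, (-(φ u (A w))/2) • Tm φ u w) v
          = ∑ w ∈ t, ((-(φ u (A w))/2 * φ u v) • w - (-(φ u (A w))/2 * φ w v) • u) := by
        intro u hu
        rw [LinearMap.sum_apply]
        refine Finset.sum_congr rfl fun w hw => ?_
        rw [LinearMap.smul_apply, Tm_apply, smul_sub, smul_smul, smul_smul]
      rw [Finset.sum_congr rfl step1]
      rw [Finset.sum_congr rfl (fun u (hu : u ∈ t) => Finset.sum_sub_distrib _ _)]
      rw [Finset.sum_sub_distrib]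
      rw [Finset.sum_comm (s := t) (t := t)
        (f := fun u w => (-(φ u (A w))/2 * φ u v) • w)]
      rw [← Finset.sum_sub_distrib]
      refine Finset.sum_congr rfl fun w hw => ?_
      rw [← Finset.sum_sub_distrib]
      refine Finset.sum_congr rfl fun u hu => ?_
      rw [← sub_smul]
      refine congrArg (· • w) ?_
      rw [hM u w]
      ring
    rw [hAv, ← hBv]
  rw [hAeq]
  exact sum_mem fun u _ => sum_mem fun w _ => smul_mem _ _ (subset_span ⟨u, w, rfl⟩)

end helpers4
section helpers5
open scoped Classical
open Submodule
variable {V : Type*} [AddCommGroup V] [Module ℂ V] (φ : V →ₗ[ℂ] V →ₗ[ℂ] ℂ)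

lemma Tm_sub_left (a b w : V) : Tm φ (a - b) w = Tm φ a w - Tm φ b w := by
  ext v; simp [Tm_apply]; module

lemma Tm_sub_right (a w₁ w₂ : V) : Tm φ a (w₁ - w₂) = Tm φ a w₁ - Tm φ a w₂ := by
  ext v; simp [Tm_apply]; module

lemma Tm_zero_right (a : V) : Tm φ a 0 = 0 := by
  ext v; simp [Tm_apply]

lemma Tm_fd (u w : V) : FiniteDimensional ℂ ↥(LinearMap.range (Tm φ u w)) := by
  have hle : LinearMap.range (Tm φ u w) ≤ span ℂ ({u, w} : Set V) := by
    rintro _ ⟨v, rfl⟩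
    rw [Tm_apply]
    exact sub_mem (smul_mem _ _ (subset_span (by simp))) (smul_mem _ _ (subset_span (by simp)))
  have : FiniteDimensional ℂ (span ℂ ({u, w} : Set V)) :=
    FiniteDimensional.span_of_finite ℂ (Set.toFinite _)
  exact Submodule.finiteDimensional_of_le hle

lemma Tm_mem_gfin (hsymm : ∀ u v, φ u v = φ v u) (u w : V) :
    Tm φ u w ∈ {A : Module.End ℂ V |
      FiniteDimensional ℂ ↥(LinearMap.range A) ∧
      ∀ u v, φ (A u) v + φ u (A v) = 0} :=
  ⟨Tm_fd φ u w, Tm_skew φ hsymm u w⟩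

end helpers5
/-- If `V` is an infinite-dimensional complex vector space with a nondegenerate
symmetric bilinear form `φ`, then the Lie algebra `so_fin(V, φ)` of finite-rank
endomorphisms `A` with `φ(Au,v) + φ(u,Av) = 0` is simple: it is non-abelian and
has no ideals other than `{0}` and itself. -/
theorem stmt3 {V : Type*} [AddCommGroup V] [Module ℂ V]
    (hinf : ¬ FiniteDimensional ℂ V)
    (φ : V →ₗ[ℂ] V →ₗ[ℂ] ℂ)
    (hsymm : ∀ u v, φ u v = φ v u)
    (hnd : ∀ u : V, u ≠ 0 → ∃ v, φ u v ≠ 0)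
    (gfin : Set (Module.End ℂ V))
    (hgfin : gfin = {A : Module.End ℂ V |
      FiniteDimensional ℂ ↥(LinearMap.range A) ∧
      ∀ u v, φ (A u) v + φ u (A v) = 0}) :
    (∃ A ∈ gfin, ∃ B ∈ gfin, ⁅A, B⁆ ≠ 0) ∧
    (∀ I : Set (Module.End ℂ V), I ⊆ gfin →
      (0 : Module.End ℂ V) ∈ I →
      (∀ x ∈ I, ∀ y ∈ I, x + y ∈ I) →
      (∀ (c : ℂ), ∀ x ∈ I, c • x ∈ I) →
      (∀ A ∈ gfin, ∀ x ∈ I, ⁅A, x⁆ ∈ I) →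
      I = {0} ∨ I = gfin) := by
  classical
  subst hgfin
  constructor
  · -- non-abelian
    have hons0 : ONS φ (∅ : Finset V) := fun u hu => absurd hu (Finset.notMem_empty u)
    obtain ⟨c₁, h11, _⟩ := exists_unit_orth φ hsymm hnd hinf hons0
    have hons1 : ONS φ ({c₁} : Finset V) := by
      intro u hu v hv
      rw [Finset.mem_singleton] at hu hv
      subst hu; subst hv; simp [h11]
    obtain ⟨c₂, h22, h2o⟩ := exists_unit_orth φ hsymm hnd hinf hons1
    have hc2c1 : φ c₂ c₁ = 0 := h2o c₁ (Submodule.subset_span (by simp))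
    have hons2 : ONS φ (insert c₂ ({c₁} : Finset V)) :=
      ONS_insert φ hsymm hons1 h22 (fun u hu => by
        rw [Finset.mem_singleton] at hu; subst hu; exact hc2c1)
    obtain ⟨c₃, h33, h3o⟩ := exists_unit_orth φ hsymm hnd hinf hons2
    have hc3c1 : φ c₃ c₁ = 0 := h3o c₁ (Submodule.subset_span (by simp))
    have hc3c2 : φ c₃ c₂ = 0 := h3o c₂ (Submodule.subset_span (by simp))
    refine ⟨Tm φ c₁ c₂, Tm_mem_gfin φ hsymm c₁ c₂, Tm φ c₂ c₃, Tm_mem_gfin φ hsymm c₂ c₃, ?_⟩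
    have hbr : ⁅Tm φ c₁ c₂, Tm φ c₂ c₃⁆
        = Tm φ ((Tm φ c₁ c₂) c₂) c₃ + Tm φ c₂ ((Tm φ c₁ c₂) c₃) :=
      Tm_bracket φ (Tm φ c₁ c₂) (Tm_skew φ hsymm c₁ c₂) c₂ c₃
    have h1 : (Tm φ c₁ c₂) c₂ = -c₁ := by
      rw [Tm_apply, hsymm c₁ c₂, hc2c1, h22]; simp
    have h2 : (Tm φ c₁ c₂) c₃ = 0 := by
      rw [Tm_apply, hsymm c₁ c₃, hsymm c₂ c₃, hc3c1, hc3c2]; simp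
    intro hcon
    have : (0 : Module.End ℂ V) c₁ = (-(Tm φ c₁ c₃)) c₁ := by
      rw [← hcon, hbr, h1, h2, Tm_zero_right]
      congr 1
      rw [show (-c₁ : V) = (-1 : ℂ) • c₁ by module, Tm_smul_left]
      simp
    rw [LinearMap.zero_apply, LinearMap.neg_apply, Tm_apply, h11, hc3c1] at this
    simp only [one_smul, zero_smul, sub_zero, neg_eq_iff_eq_neg] at this
    have hc3 : c₃ = 0 := by rw [← neg_neg c₃, ← this, neg_zero]
    rw [hc3] at h33
    simp at h33
  · -- ideals
    intro I hIsub h0 hadd hsmul hbrI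
    by_cases hItriv : ∀ x ∈ I, x = 0
    · left
      ext y
      simp only [Set.mem_singleton_iff]
      exact ⟨fun hy => hItriv y hy, fun hy => hy ▸ h0⟩
    · right
      push_neg at hItriv
      obtain ⟨x, hxI, hx0⟩ := hItriv
      obtain ⟨hxfd, hxskew⟩ := hIsub hxI
      have hax : ∃ a, x a ≠ 0 := by
        by_contra h; push_neg at h; exact hx0 (LinearMap.ext h)
      obtain ⟨a, ha⟩ := hax
      set b := x a with hbdef
      -- orthonormal family containing range x
      obtain ⟨s₀, hs₀⟩ := (Submodule.fg_iff_finiteDimensional _).mpr hxfd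
      obtain ⟨t, ht, hbt⟩ := exists_ons_span φ hsymm hnd s₀
      have hrange : ∀ v, x v ∈ Submodule.span ℂ (t : Set V) := by
        intro v
        have hm : x v ∈ LinearMap.range x := LinearMap.mem_range_self x v
        rw [← hs₀] at hm
        exact Submodule.span_le.mpr hbt hm
      obtain ⟨c, hcc, hcorth⟩ := exists_unit_orth φ hsymm hnd hinf ht
      have hxc : x c = 0 :=
        skew_vanish φ hnd hxskew hrange (fun u hu => hcorth u (Submodule.subset_span hu))
      have hcb : φ c b = 0 := hcorth b (hrange a)
      -- step 0 : Tm b c ∈ I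
      have h1 : Tm φ b c ∈ I := by
        have hmem := hbrI (Tm φ a c) (Tm_mem_gfin φ hsymm a c) x hxI
        have heq : ⁅Tm φ a c, x⁆ = - Tm φ b c := by
          rw [show ⁅Tm φ a c, x⁆ = -⁅x, Tm φ a c⁆ by rw [Ring.lie_def, Ring.lie_def]; abel, Tm_bracket φ x hxskew a c, hxc, Tm_zero_right, add_zero]
        rw [heq] at hmem
        have := hsmul (-1) _ hmem
        simpa using this
      -- step A : ∀ q, Tm b q ∈ I
      have hA : ∀ q, Tm φ b q ∈ I := by
        intro q
        have hmem := hbrI (Tm φ c q) (Tm_mem_gfin φ hsymm c q) _ h1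
        have heq : ⁅Tm φ c q, Tm φ b c⁆ = Tm φ b q - φ q c • Tm φ b c := by
          rw [Tm_bracket φ (Tm φ c q) (Tm_skew φ hsymm c q) b c]
          rw [show (Tm φ c q) b = -(φ q b) • c by rw [Tm_apply, hcb]; module]
          rw [show (Tm φ c q) c = q - φ q c • c by rw [Tm_apply, hcc]; module]
          rw [Tm_smul_left, Tm_self, Tm_sub_right, Tm_smul_right]
          module
        rw [heq] at hmem
        have := hadd _ hmem _ (hsmul (φ q c) _ h1)
        simpa using this
      -- e with φ e b = 1
      have hbne : b ≠ 0 := ha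
      obtain ⟨e₀, he₀⟩ := hnd b hbne
      set e := (φ b e₀)⁻¹ • e₀ with hedef
      have heb : φ e b = 1 := by
        rw [hedef, map_smul, LinearMap.smul_apply, smul_eq_mul, hsymm e₀ b]
        exact inv_mul_cancel₀ he₀
      -- step 5
      have h5 : ∀ p q, Tm φ p q - φ p b • Tm φ e q ∈ I := by
        intro p q
        have hmem := hbrI (Tm φ e p) (Tm_mem_gfin φ hsymm e p) _ (hA q)
        have heq : ⁅Tm φ e p, Tm φ b q⁆
            = (Tm φ p q - φ p b • Tm φ e q) + Tm φ b ((Tm φ e p) q) := by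
          rw [Tm_bracket φ (Tm φ e p) (Tm_skew φ hsymm e p) b q]
          rw [show (Tm φ e p) b = p - φ p b • e by rw [Tm_apply, heb]; module]
          rw [Tm_sub_left, Tm_smul_left]
          try module
        rw [heq] at hmem
        have h2 := hadd _ hmem _ (hsmul (-1) _ (hA ((Tm φ e p) q)))
        simpa using h2
      -- step 6 : ∀ q, Tm e q ∈ I
      have h6 : ∀ q, Tm φ e q ∈ I := by
        intro q
        have hh : φ (q - φ q b • e) b = 0 := by
          rw [map_sub, map_smul, LinearMap.sub_apply, LinearMap.smul_apply, smul_eq_mul,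
            heb, mul_one, sub_self]
        have h5' := h5 (q - φ q b • e) e
        rw [hh, zero_smul, sub_zero] at h5'
        have heq : Tm φ e q = (-1 : ℂ) • Tm φ (q - φ q b • e) e := by
          rw [Tm_sub_left φ q (φ q b • e) e,
            show Tm φ ((φ q b) • e) e = (φ q b) • Tm φ e e from Tm_smul_left φ (φ q b) e e,
            Tm_self, show Tm φ q e = - Tm φ e q from Tm_neg_swap φ q e]
          module
        rw [heq]
        exact hsmul _ _ h5'
      -- step 7 : all elementary maps in I
      have h7 : ∀ p q, Tm φ p q ∈ I := by
        intro p q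
        have := hadd _ (h5 p q) _ (hsmul (φ p b) _ (h6 q))
        simpa using this
      -- conclude
      refine Set.Subset.antisymm hIsub ?_
      intro A hAg
      obtain ⟨hAfd, hAskew⟩ := hAg
      obtain ⟨sA, hsA⟩ := (Submodule.fg_iff_finiteDimensional _).mpr hAfd
      obtain ⟨tA, htA, hbtA⟩ := exists_ons_span φ hsymm hnd sA
      have hrangeA : ∀ v, A v ∈ Submodule.span ℂ (tA : Set V) := by
        intro v
        have hm : A v ∈ LinearMap.range A := LinearMap.mem_range_self A v
        rw [← hsA] at hm
        exact Submodule.span_le.mpr hbtA hm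
      have hspan : A ∈ Submodule.span ℂ (TmSet φ) := mem_span_Tm φ hsymm hAskew htA hrangeA
      refine Submodule.span_induction
        (fun B hB => ?_) h0 (fun y z _ _ hy hz => hadd y hy z hz)
        (fun r y _ hy => hsmul r y hy) hspan
      obtain ⟨u, w, rfl⟩ := hB
      exact h7 u w
end

section
/- Let V be a finite-dimensional complex vector space with symmetric nondegenerate bilinear form φ, dim V > 4. Then the orthogonal Lie algebra so(V, φ) = {A ∈ End(V) : φ(Au,v) + φ(u,Av) = 0} is a simple Lie algebra. -/
open LinearMap Module

namespace SO5

variable {V : Type*} [AddCommGroup V] [Module ℂ V]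
variable (φ : LinearMap.BilinForm ℂ V) {n : ℕ} (b : Basis (Fin n) ℂ V)

/-- "Matrix unit": `v ↦ φ (b j) v • b i`. -/
noncomputable def Em (i j : Fin n) : Module.End ℂ V := (φ (b j)).smulRight (b i)

lemma Em_apply (i j : Fin n) (v : V) : Em φ b i j v = φ (b j) v • b i := rfl

/-- Skew basis element `B_{ij} = E_{ij} - E_{ji}`. -/
noncomputable def Bm (i j : Fin n) : Module.End ℂ V := Em φ b i j - Em φ b j i

lemma Bm_apply (i j : Fin n) (v : V) :
    Bm φ b i j v = φ (b j) v • b i - φ (b i) v • b j := rfl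

lemma mem_so_iff (f : Module.End ℂ V) :
    f ∈ skewAdjointLieSubalgebra φ ↔ ∀ u w, φ (f u) w = -(φ u (f w)) := by
  constructor
  · intro h u w; simpa using h u w
  · intro h u w; simpa using h u w

lemma Bm_mem (hsm : ∀ u v, φ u v = φ v u) (i j : Fin n) :
    Bm φ b i j ∈ skewAdjointLieSubalgebra φ := by
  rw [mem_so_iff]
  intro u w
  simp only [Bm_apply, map_sub, map_smul, smul_eq_mul, LinearMap.sub_apply, LinearMap.smul_apply]
  rw [hsm u (b i), hsm u (b j)]
  ring

variable (hb : ∀ i j, φ (b i) (b j) = if i = j then 1 else 0)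
include hb

lemma coord (v : V) (i : Fin n) : φ (b i) v = b.repr v i := by
  conv_lhs => rw [← b.sum_repr v]
  rw [map_sum]
  simp [hb, mul_ite, Finset.sum_ite_eq]

lemma ext_of_entries {f g : Module.End ℂ V}
    (h : ∀ i j, φ (b i) (f (b j)) = φ (b i) (g (b j))) : f = g := by
  apply b.ext; intro j
  apply b.repr.injective; ext i
  rw [← coord φ b hb, ← coord φ b hb, h]

lemma Em_comp (i j k l : Fin n) :
    (Em φ b i j * Em φ b k l : Module.End ℂ V) = if j = k then Em φ b i l else 0 := by
  by_cases h : j = k <;>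
    · ext v
      simp [h, Em_apply, Module.End.mul_apply, map_smul, smul_eq_mul, hb, smul_smul]

lemma Bm_bracket {i j k : Fin n} (hij : i ≠ j) (hjk : j ≠ k) (hik : i ≠ k) :
    ⁅Bm φ b i j, Bm φ b j k⁆ = Bm φ b i k := by
  simp only [Ring.lie_def, Bm, sub_mul, mul_sub, Em_comp φ b hb, if_pos rfl, if_neg hjk,
    if_neg hij, if_neg hik, if_neg (Ne.symm hij), if_neg (Ne.symm hjk), if_neg (Ne.symm hik)]
  abel

omit hb in
lemma Bm_swap (i j : Fin n) : Bm φ b j i = -Bm φ b i j := by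
  simp [Bm]

omit hb in
lemma Bm_same (i : Fin n) : Bm φ b i i = 0 := sub_self _

lemma entry_Bm (i j u v : Fin n) :
    φ (b u) (Bm φ b i j (b v)) =
      (if u = i then 1 else 0) * (if j = v then 1 else 0)
        - (if u = j then 1 else 0) * (if i = v then 1 else 0) := by
  simp only [Bm_apply, map_sub, map_smul, smul_eq_mul, hb]
  split_ifs <;> ring

lemma Bm_left (i j u : Fin n) (w : V) :
    φ (b u) (Bm φ b i j w) =
      (if u = i then 1 else 0) * φ (b j) w - (if u = j then 1 else 0) * φ (b i) w := by
  simp only [Bm_apply, map_sub, map_smul, smul_eq_mul, hb]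
  split_ifs <;> ring

lemma pi_entry (hsm : ∀ u v, φ u v = φ v u) {i j : Fin n} (hij : i ≠ j)
    (A : Module.End ℂ V) (hA : ∀ u w, φ (A u) w = -(φ u (A w))) (u v : Fin n) :
    φ (b u) ((-⁅Bm φ b i j, ⁅Bm φ b i j, A⁆⁆ : Module.End ℂ V) (b v)) =
      if ((u = i ∨ u = j) ∧ ¬(v = i ∨ v = j)) ∨ ((v = i ∨ v = j) ∧ ¬(u = i ∨ u = j))
      then φ (b u) (A (b v)) else 0 := by
  have ha : ∀ p q : Fin n, φ (b p) (A (b q)) = -(φ (b q) (A (b p))) := by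
    intro p q
    rw [hsm (b p) (A (b q)), hA]
  have ha0 : ∀ p : Fin n, φ (b p) (A (b p)) = 0 := by
    intro p
    linear_combination (ha p p) / 2
  have hBbv : ∀ w : Fin n, Bm φ b i j (b w) =
      (if w = j then (1:ℂ) else 0) • b i - (if w = i then (1:ℂ) else 0) • b j := by
    intro w
    rw [Bm_apply, hb, hb]
    simp only [show ((j = w) ↔ (w = j)) from eq_comm, show ((i = w) ↔ (w = i)) from eq_comm]
  have expand : (-⁅Bm φ b i j, ⁅Bm φ b i j, A⁆⁆ : Module.End ℂ V) (b v)
      = -(Bm φ b i j (Bm φ b i j (A (b v)))) + (2:ℂ) • Bm φ b i j (A (Bm φ b i j (b v)))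
        - A (Bm φ b i j (Bm φ b i j (b v))) := by
    simp only [Ring.lie_def, LinearMap.neg_apply, LinearMap.sub_apply, Module.End.mul_apply,
      map_sub, two_smul]
    abel
  rw [expand]
  simp only [map_add, map_sub, map_neg, map_smul, smul_eq_mul]
  simp only [hBbv, map_sub, map_smul, Bm_left φ b hb, smul_eq_mul]
  by_cases hui : u = i
  · by_cases hvi : v = i
    · simp [hui, hvi, hij, Ne.symm hij]
      linear_combination 2 * ha0 i - 2 * ha0 j
    · by_cases hvj : v = j
      · simp [hui, hvj, hij, Ne.symm hij]
        linear_combination 2 * ha i j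
      · simp [hui, hvi, hvj, hij, Ne.symm hij]
  · by_cases huj : u = j
    · by_cases hvi : v = i
      · simp [huj, hvi, hij, Ne.symm hij]
        linear_combination 2 * ha j i
      · by_cases hvj : v = j
        · simp [huj, hvj, hij, Ne.symm hij]
          linear_combination 2 * ha0 j - 2 * ha0 i
        · simp [huj, hvi, hvj, hij, Ne.symm hij]
    · by_cases hvi : v = i
      · simp [hui, huj, hvi, hij, Ne.symm hij]
      · by_cases hvj : v = j
        · simp [hui, huj, hvj, hij, Ne.symm hij]
        · simp [hui, huj, hvi, hvj, hij, Ne.symm hij]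

lemma bl_bracket (hsm : ∀ u v, φ u v = φ v u) {i j k : Fin n}
    (hij : i ≠ j) (hjk : j ≠ k) (hik : i ≠ k) :
    ⁅(⟨Bm φ b i j, Bm_mem φ b hsm i j⟩ : skewAdjointLieSubalgebra φ),
      (⟨Bm φ b j k, Bm_mem φ b hsm j k⟩ : skewAdjointLieSubalgebra φ)⁆
      = ⟨Bm φ b i k, Bm_mem φ b hsm i k⟩ := by
  apply Subtype.ext
  show ⁅Bm φ b i j, Bm φ b j k⁆ = Bm φ b i k
  exact Bm_bracket φ b hb hij hjk hik

end SO5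

open SO5 Module LinearMap in
/-- For a finite-dimensional complex vector space `V` with `dim V > 4` and a
symmetric nondegenerate bilinear form `φ`, the orthogonal Lie algebra
`so(V, φ) = {A : φ(Au,v) + φ(u,Av) = 0}` is simple. -/
theorem stmt18 {V : Type*} [AddCommGroup V] [Module ℂ V] [FiniteDimensional ℂ V]
    (hdim : 4 < Module.finrank ℂ V)
    (φ : LinearMap.BilinForm ℂ V)
    (hsymm : ∀ u v, φ u v = φ v u)
    (hnd : φ.Nondegenerate) :
    LieAlgebra.IsSimple ℂ ↥(skewAdjointLieSubalgebra φ) := by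
  classical
  -- construct an orthonormal basis
  haveI : Invertible (2 : ℂ) := invertibleOfNonzero two_ne_zero
  set N := Module.finrank ℂ V with hN
  obtain ⟨v, hv⟩ := LinearMap.BilinForm.exists_orthogonal_basis
    (B := φ) ⟨fun x y => hsymm x y⟩
  have hvd : ∀ i, φ (v i) (v i) ≠ 0 := fun i =>
    hv.not_isOrtho_basis_self_of_separatingLeft hnd.1 i
  have hz : ∀ i : Fin N, ∃ z : ℂ, z ^ 2 = φ (v i) (v i) :=
    fun i => IsAlgClosed.exists_pow_nat_eq _ two_pos
  choose z hz2 using hz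
  have hz0 : ∀ i, z i ≠ 0 := by
    intro i h
    apply hvd i
    rw [← hz2 i, h]
    ring
  let u : Fin N → ℂˣ := fun i => (Units.mk0 (z i) (hz0 i))⁻¹
  let b : Basis (Fin N) ℂ V := v.unitsSMul u
  have hbv : ∀ i, b i = (z i)⁻¹ • v i := fun i => by
    simp [b, u, Basis.unitsSMul_apply, Units.smul_def]
  have hb : ∀ i j, φ (b i) (b j) = if i = j then 1 else 0 := by
    intro i j
    simp only [hbv, map_smul, LinearMap.smul_apply, smul_eq_mul]
    by_cases h : i = j
    · subst h
      rw [if_pos rfl, ← hz2 i, sq]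
      field_simp
      exact div_self (hz0 i)
    · rw [if_neg h, hv h]
      ring
  -- abbreviations
  set L := skewAdjointLieSubalgebra φ with hL
  let bl : Fin N → Fin N → ↥L := fun i j => ⟨Bm φ b i j, Bm_mem φ b hsymm i j⟩
  have hblsw : ∀ i j, bl j i = -bl i j := by
    intro i j
    apply Subtype.ext
    show Bm φ b j i = -(Bm φ b i j)
    exact Bm_swap φ b i j
  have hbl0 : ∀ i, bl i i = 0 := fun i => Subtype.ext (Bm_same φ b i)
  -- indices 0 1 2
  have h5 : 4 < N := hdim
  constructor
  case non_abelian =>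
    intro habl
    let i0 : Fin N := ⟨0, by omega⟩
    let i1 : Fin N := ⟨1, by omega⟩
    let i2 : Fin N := ⟨2, by omega⟩
    have h01 : i0 ≠ i1 := by simp [i0, i1, Fin.ext_iff]
    have h12 : i1 ≠ i2 := by simp [i1, i2, Fin.ext_iff]
    have h02 : i0 ≠ i2 := by simp [i0, i2, Fin.ext_iff]
    have htriv : ⁅bl i0 i1, bl i1 i2⁆ = 0 := trivial_lie_zero _ _ _ _
    rw [bl_bracket φ b hb hsymm h01 h12 h02] at htriv
    have hc : Bm φ b i0 i2 = 0 := by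
      have := congrArg (Subtype.val) htriv
      simpa using this
    have h2 : Bm φ b i0 i2 (b i2) = 0 := by rw [hc]; rfl
    rw [Bm_apply, hb, hb] at h2
    simp [if_neg h02] at h2
    exact b.ne_zero i0 h2
  case eq_bot_or_eq_top =>
    intro I
    by_cases hI : I = ⊥
    · exact Or.inl hI
    right
    -- get a nonzero element of I
    have hex : ∃ x : ↥L, x ∈ I ∧ x ≠ 0 := by
      by_contra hcon
      push_neg at hcon
      exact hI ((LieSubmodule.eq_bot_iff I).mpr (fun m hm => by
        by_contra hm0
        exact hm0 (hcon m hm ▸ rfl)))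
    obtain ⟨x, hxI, hx0⟩ := hex
    set A : Module.End ℂ V := (x : Module.End ℂ V) with hA
    have hAsk : ∀ u w, φ (A u) w = -(φ u (A w)) := (mem_so_iff φ A).mp x.2
    have haA : ∀ s t : Fin N, φ (b s) (A (b t)) = -(φ (b t) (A (b s))) := by
      intro s t
      rw [hsymm (b s) (A (b t)), hAsk]
    have ha0 : ∀ s : Fin N, φ (b s) (A (b s)) = 0 := by
      intro s
      linear_combination (haA s s) / 2
    -- a nonzero off-diagonal entry
    have hexpq : ∃ p q : Fin N, p ≠ q ∧ φ (b p) (A (b q)) ≠ 0 := by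
      by_contra hcon
      push_neg at hcon
      apply hx0
      apply Subtype.ext
      show A = 0
      apply ext_of_entries φ b hb
      intro s t
      by_cases h : s = t
      · subst h
        simp [ha0 s]
      · simp [hcon s t h]
    obtain ⟨p, q, hpq, hapq⟩ := hexpq
    -- three further indices
    have hcard : 3 ≤ (({p, q}ᶜ : Finset (Fin N))).card := by
      have h2 : ({p, q} : Finset (Fin N)).card ≤ 2 := by
        apply le_trans (Finset.card_insert_le _ _)
        simp
      have := Finset.card_compl ({p, q} : Finset (Fin N))
      rw [this]
      simp only [Fintype.card_fin]
      omega
    obtain ⟨t, hts, htc⟩ := Finset.exists_subset_card_eq hcard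
    obtain ⟨j, l, m, hjl, hjm, hlm, rfl⟩ := Finset.card_eq_three.mp htc
    have hmem : ∀ s ∈ ({j, l, m} : Finset (Fin N)), s ≠ p ∧ s ≠ q := by
      intro s hs
      have := hts hs
      simp only [Finset.mem_compl, Finset.mem_insert, Finset.mem_singleton] at this
      push_neg at this
      exact this
    obtain ⟨hjp, hjq⟩ := hmem j (by simp)
    obtain ⟨hlp, hlq⟩ := hmem l (by simp)
    obtain ⟨hmp, hmq⟩ := hmem m (by simp)
    -- the projections
    let pr : Fin N → Fin N → ↥L → ↥L := fun i j w => -⁅bl i j, ⁅bl i j, w⁆⁆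
    have hprmem : ∀ i j w, w ∈ I → pr i j w ∈ I := by
      intro i j w hw
      exact neg_mem (lie_mem_right ℂ _ I _ _ (lie_mem_right ℂ _ I _ _ hw))
    have hprcoe : ∀ i j w, ((pr i j w : ↥L) : Module.End ℂ V)
        = -⁅Bm φ b i j, ⁅Bm φ b i j, (w : Module.End ℂ V)⁆⁆ := by
      intro i j w
      rfl
    have hprent : ∀ (i j : Fin N), i ≠ j → ∀ (w : ↥L) (s t : Fin N),
        φ (b s) (((pr i j w : ↥L) : Module.End ℂ V) (b t)) =
        if ((s = i ∨ s = j) ∧ ¬(t = i ∨ t = j)) ∨ ((t = i ∨ t = j) ∧ ¬(s = i ∨ s = j))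
        then φ (b s) ((w : Module.End ℂ V) (b t)) else 0 := by
      intro i j hij w s t
      rw [hprcoe]
      exact pi_entry φ b hb hsymm hij _ ((mem_so_iff φ _).mp w.2) s t
    -- extract bl p q
    set y := pr p m (pr p l (pr q l (pr p j x))) with hy
    have hyI : y ∈ I := hprmem _ _ _ (hprmem _ _ _ (hprmem _ _ _ (hprmem _ _ _ hxI)))
    have hpj : p ≠ j := Ne.symm hjp
    have hql : q ≠ l := Ne.symm hlq
    have hpl : p ≠ l := Ne.symm hlp
    have hpm : p ≠ m := Ne.symm hmp
    have hycoe : (y : Module.End ℂ V) = φ (b p) (A (b q)) • Bm φ b p q := by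
      apply ext_of_entries φ b hb
      intro s t
      rw [hy]
      rw [hprent p m hpm _ s t, hprent p l hpl _ s t, hprent q l hql _ s t,
        hprent p j hpj _ s t]
      rw [LinearMap.smul_apply, map_smul, smul_eq_mul, entry_Bm φ b hb]
      rw [← hA]
      by_cases hsp : s = p
      · by_cases htq : t = q
        · simp [hsp, htq,
            hpq, hjp, hjq, hlp, hlq, hmp, hmq, hjl, hjm, hlm, Ne.symm hpq, Ne.symm hjp, Ne.symm hjq, Ne.symm hlp, Ne.symm hlq, Ne.symm hmp, Ne.symm hmq, Ne.symm hjl, Ne.symm hjm, Ne.symm hlm]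
        · by_cases htp : t = p
          · simp [hsp, htp, htq, Ne.symm htq,
              hpq, hjp, hjq, hlp, hlq, hmp, hmq, hjl, hjm, hlm, Ne.symm hpq, Ne.symm hjp, Ne.symm hjq, Ne.symm hlp, Ne.symm hlq, Ne.symm hmp, Ne.symm hmq, Ne.symm hjl, Ne.symm hjm, Ne.symm hlm]
          · by_cases htl : t = l
            · simp [hsp, htl, htq, htp, Ne.symm htq, Ne.symm htp,
                hpq, hjp, hjq, hlp, hlq, hmp, hmq, hjl, hjm, hlm, Ne.symm hpq, Ne.symm hjp, Ne.symm hjq, Ne.symm hlp, Ne.symm hlq, Ne.symm hmp, Ne.symm hmq, Ne.symm hjl, Ne.symm hjm, Ne.symm hlm]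
            · simp [hsp, htq, htp, htl, Ne.symm htq, Ne.symm htp, Ne.symm htl,
                hpq, hjp, hjq, hlp, hlq, hmp, hmq, hjl, hjm, hlm, Ne.symm hpq, Ne.symm hjp, Ne.symm hjq, Ne.symm hlp, Ne.symm hlq, Ne.symm hmp, Ne.symm hmq, Ne.symm hjl, Ne.symm hjm, Ne.symm hlm]
      · by_cases htp : t = p
        · by_cases hsq : s = q
          · simp [hsq, htp, hsp, Ne.symm hsp,
              hpq, hjp, hjq, hlp, hlq, hmp, hmq, hjl, hjm, hlm, Ne.symm hpq, Ne.symm hjp, Ne.symm hjq, Ne.symm hlp, Ne.symm hlq, Ne.symm hmp, Ne.symm hmq, Ne.symm hjl, Ne.symm hjm, Ne.symm hlm]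
            linear_combination haA q p
          · by_cases hsl : s = l
            · simp [hsl, htp, hsp, hsq, Ne.symm hsp, Ne.symm hsq,
                hpq, hjp, hjq, hlp, hlq, hmp, hmq, hjl, hjm, hlm, Ne.symm hpq, Ne.symm hjp, Ne.symm hjq, Ne.symm hlp, Ne.symm hlq, Ne.symm hmp, Ne.symm hmq, Ne.symm hjl, Ne.symm hjm, Ne.symm hlm]
            · simp [htp, hsp, hsq, hsl, Ne.symm hsp, Ne.symm hsq, Ne.symm hsl,
                hpq, hjp, hjq, hlp, hlq, hmp, hmq, hjl, hjm, hlm, Ne.symm hpq, Ne.symm hjp, Ne.symm hjq, Ne.symm hlp, Ne.symm hlq, Ne.symm hmp, Ne.symm hmq, Ne.symm hjl, Ne.symm hjm, Ne.symm hlm]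
        · by_cases hsm' : s = m
          · by_cases htl : t = l
            · simp [hsm', htl, hsp, htp, Ne.symm hsp, Ne.symm htp,
                hpq, hjp, hjq, hlp, hlq, hmp, hmq, hjl, hjm, hlm, Ne.symm hpq, Ne.symm hjp, Ne.symm hjq, Ne.symm hlp, Ne.symm hlq, Ne.symm hmp, Ne.symm hmq, Ne.symm hjl, Ne.symm hjm, Ne.symm hlm]
            · simp [hsm', hsp, htp, htl, Ne.symm hsp, Ne.symm htp, Ne.symm htl,
                hpq, hjp, hjq, hlp, hlq, hmp, hmq, hjl, hjm, hlm, Ne.symm hpq, Ne.symm hjp, Ne.symm hjq, Ne.symm hlp, Ne.symm hlq, Ne.symm hmp, Ne.symm hmq, Ne.symm hjl, Ne.symm hjm, Ne.symm hlm]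
          · by_cases htm : t = m
            · by_cases hsl : s = l
              · simp [hsl, htm, hsp, htp, hsm', Ne.symm hsp, Ne.symm htp, Ne.symm hsm',
                  hpq, hjp, hjq, hlp, hlq, hmp, hmq, hjl, hjm, hlm, Ne.symm hpq, Ne.symm hjp, Ne.symm hjq, Ne.symm hlp, Ne.symm hlq, Ne.symm hmp, Ne.symm hmq, Ne.symm hjl, Ne.symm hjm, Ne.symm hlm]
              · simp [htm, hsp, htp, hsm', hsl, Ne.symm hsp, Ne.symm htp, Ne.symm hsm', Ne.symm hsl,
                  hpq, hjp, hjq, hlp, hlq, hmp, hmq, hjl, hjm, hlm, Ne.symm hpq, Ne.symm hjp, Ne.symm hjq, Ne.symm hlp, Ne.symm hlq, Ne.symm hmp, Ne.symm hmq, Ne.symm hjl, Ne.symm hjm, Ne.symm hlm]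
            · simp [hsp, htp, hsm', htm, Ne.symm hsp, Ne.symm htp, Ne.symm hsm', Ne.symm htm,
                hpq, hjp, hjq, hlp, hlq, hmp, hmq, hjl, hjm, hlm, Ne.symm hpq, Ne.symm hjp, Ne.symm hjq, Ne.symm hlp, Ne.symm hlq, Ne.symm hmp, Ne.symm hmq, Ne.symm hjl, Ne.symm hjm, Ne.symm hlm]
    -- bl p q lies in I
    have hblpqI : bl p q ∈ I := by
      have hyspan : bl p q = (φ (b p) (A (b q)))⁻¹ • y := by
        apply Subtype.ext
        show Bm φ b p q = (φ (b p) (A (b q)))⁻¹ • (y : Module.End ℂ V)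
        rw [hycoe, smul_smul, inv_mul_cancel₀ hapq, one_smul]
      rw [hyspan]
      exact SMulMemClass.smul_mem _ hyI
    -- generation of all basis elements
    have hblbr : ∀ i j k : Fin N, i ≠ j → j ≠ k → i ≠ k → ⁅bl i j, bl j k⁆ = bl i k := by
      intro i j k hij hjk hik
      exact bl_bracket φ b hb hsymm hij hjk hik
    have hgen1 : ∀ t : Fin N, t ≠ p → t ≠ q → bl p t ∈ I := by
      intro t ht1 ht2
      have hb1 : ⁅bl p q, bl q t⁆ ∈ I := lie_mem_left ℂ _ I _ _ hblpqI
      rwa [hblbr p q t hpq (Ne.symm ht2) (Ne.symm ht1)] at hb1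
    have hgen2 : ∀ t : Fin N, t ≠ p → t ≠ q → bl q t ∈ I := by
      intro t ht1 ht2
      have hqpI : bl q p ∈ I := by rw [hblsw]; exact neg_mem hblpqI
      have hb1 : ⁅bl q p, bl p t⁆ ∈ I := lie_mem_left ℂ _ I _ _ hqpI
      rwa [hblbr q p t (Ne.symm hpq) (Ne.symm ht1) (Ne.symm ht2)] at hb1
    have hgen : ∀ s t : Fin N, bl s t ∈ I := by
      intro s t
      by_cases hst : s = t
      · rw [hst, hbl0]; exact zero_mem I
      by_cases hsp : s = p
      · subst hsp
        by_cases htq : t = q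
        · subst htq; exact hblpqI
        · exact hgen1 t (Ne.symm hst) htq
      by_cases hsq : s = q
      · subst hsq
        by_cases htp : t = p
        · subst htp; rw [hblsw]; exact neg_mem hblpqI
        · exact hgen2 t htp (Ne.symm hst)
      by_cases htp : t = p
      · subst htp; rw [hblsw]; exact neg_mem (hgen1 s hsp hsq)
      by_cases htq : t = q
      · subst htq; rw [hblsw]; exact neg_mem (hgen2 s hsp hsq)
      · have hspI : bl s p ∈ I := by rw [hblsw]; exact neg_mem (hgen1 s hsp hsq)
        have hb1 : ⁅bl s p, bl p t⁆ ∈ I := lie_mem_left ℂ _ I _ _ hspI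
        rwa [hblbr s p t hsp (Ne.symm htp) hst] at hb1
    -- conclude I = ⊤
    rw [eq_top_iff]
    intro z _
    have hza : ∀ s t : Fin N,
        φ (b s) ((z : Module.End ℂ V) (b t)) = -(φ (b t) ((z : Module.End ℂ V) (b s))) := by
      intro s t
      rw [hsymm (b s) _, (mem_so_iff φ _).mp z.2]
    have hrepr : z = ∑ s : Fin N, ∑ t : Fin N,
        ((2⁻¹ : ℂ) * φ (b s) ((z : Module.End ℂ V) (b t))) • bl s t := by
      apply Subtype.ext
      rw [show ((∑ s : Fin N, ∑ t : Fin N,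
          ((2⁻¹ : ℂ) * φ (b s) ((z : Module.End ℂ V) (b t))) • bl s t : ↥L) : Module.End ℂ V)
          = ∑ s : Fin N, ∑ t : Fin N,
            ((2⁻¹ : ℂ) * φ (b s) ((z : Module.End ℂ V) (b t))) • Bm φ b s t from by
        rw [AddSubmonoidClass.coe_finset_sum _ Finset.univ]
        refine Finset.sum_congr rfl fun s _ => ?_
        rw [AddSubmonoidClass.coe_finset_sum _ Finset.univ]
        rfl]
      apply ext_of_entries φ b hb
      intro s' t'
      simp only [LinearMap.sum_apply, LinearMap.smul_apply, map_sum, map_smul, smul_eq_mul,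
        entry_Bm φ b hb]
      simp only [mul_sub, mul_ite, ite_mul, mul_zero, zero_mul, mul_one, one_mul,
        Finset.sum_sub_distrib, Finset.sum_ite_irrel, Finset.sum_const_zero,
        Finset.sum_ite_eq, Finset.sum_ite_eq', Finset.mem_univ, if_true]
      linear_combination (hza t' s') / 2
    rw [hrepr]
    exact sum_mem (fun s _ => sum_mem (fun t _ => SMulMemClass.smul_mem _ (hgen s t)))
end
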